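/- Assume G/H is almost effective, i.e. 𝔥 contains no nonzero ideal of 𝔤. Suppose 𝔪 = 𝔪_1 ⊕ 𝔪_2 is a direct sum of subspaces with Q(𝔪_1, 𝔪_2) = 0, ⁅𝔥, 𝔪_i⁆ ⊆ 𝔪_i for i = 1, 2, ⁅𝔪_1, 𝔪_1⁆ ⊆ 𝔥 ⊕ 𝔪_1 and ⁅𝔪_2, 𝔪_2⁆ ⊆ 𝔥 ⊕ 𝔪_2. Set 𝔥_i := pr_𝔥(⁅𝔪_i, 𝔪_i⁆), the image of ⁅𝔪_i, 𝔪_i⁆ under the Q-orthogonal projection of 𝔤 onto 𝔥, and 𝔤_i := 𝔥_i ⊕ 𝔪_i. Then ⁅𝔪_1, 𝔪_2⁆ = 0, 𝔤_1 and 𝔤_2 are Q-orthogonal ideals of 𝔤, and 𝔤 = 𝔤_1 ⊕ 𝔤_2. -/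

import Mathlib

open scoped RealInnerProductSpace Classical
open Module Set Filter

/-- A Lie bracket on a real inner product space for which every adjoint map
`ad X : y ↦ ⁅X, y⁆` is skew-adjoint with respect to the inner product; this is the
Lie-algebraic model of a compact Lie group with a biinvariant metric. -/
structure CompactLieBracket (L : Type*) [NormedAddCommGroup L] [InnerProductSpace ℝ L] where
  br : L →ₗ[ℝ] L →ₗ[ℝ] L
  br_self : ∀ x : L, br x x = 0
  jacobi : ∀ x y z : L, br x (br y z) + br y (br z x) + br z (br x y) = 0
  skew : ∀ x y z : L, ⟪br x y, z⟫ = ⟪x, br y z⟫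

variable {L : Type*} [NormedAddCommGroup L] [InnerProductSpace ℝ L] [FiniteDimensional ℝ L]
variable (𝔩 : CompactLieBracket L) (H : Submodule ℝ L)

/-- `K` is a Lie subalgebra of `(L, 𝔩.br)`. -/
def IsLieSub (K : Submodule ℝ L) : Prop := ∀ x ∈ K, ∀ y ∈ K, 𝔩.br x y ∈ K

/-- The orthogonal projection of `L` onto `K`, as an endomorphism of `L`. -/
noncomputable def projL (K : Submodule ℝ L) : L →L[ℝ] L :=
  K.subtypeL.comp K.orthogonalProjectionOnto

-- STATEMENT 15 ingredients
/-- The span of all brackets of elements of `m`. -/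
def brSpan (m : Submodule ℝ L) : Submodule ℝ L :=
  Submodule.span ℝ { z : L | ∃ x ∈ m, ∃ y ∈ m, z = 𝔩.br x y }

/-- `𝔤ᵢ = 𝔥ᵢ ⊕ 𝔪ᵢ`, where `𝔥ᵢ = pr_𝔥 ⁅𝔪ᵢ, 𝔪ᵢ⁆`. -/
noncomputable def idealPart (m : Submodule ℝ L) : Submodule ℝ L :=
  Submodule.map ((projL H : L →L[ℝ] L) : L →ₗ[ℝ] L) (brSpan 𝔩 m) ⊔ m

-- =================== auxiliary lemmas ===================

lemma projL_mem' (K : Submodule ℝ L) (x : L) : projL K x ∈ K := by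
  simp [projL]

lemma sub_projL_mem' (K : Submodule ℝ L) (x : L) : x - projL K x ∈ Kᗮ := by
  exact K.sub_starProjection_mem_orthogonal x

lemma projL_add_eq' (K : Submodule ℝ L) {h a : L} (hh : h ∈ K) (ha : a ∈ Kᗮ) :
    projL K (h + a) = h :=
  Submodule.eq_starProjection_of_mem_orthogonal (K := K) (u := h + a) hh (by simpa using ha)

lemma br_antisymm (x y : L) : 𝔩.br x y = - 𝔩.br y x := by
  have h := 𝔩.br_self (x + y)
  simp only [map_add, LinearMap.add_apply, 𝔩.br_self, zero_add, add_zero] at h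
  exact eq_neg_of_add_eq_zero_right h

lemma inner_zero_of_orth₂ {p q : Submodule ℝ L} {y w : L}
    (hp : ∀ u ∈ p, ⟪y, u⟫ = 0) (hq : ∀ u ∈ q, ⟪y, u⟫ = 0) (hw : w ∈ p ⊔ q) :
    ⟪y, w⟫ = 0 := by
  obtain ⟨u, hu, v, hv, rfl⟩ := Submodule.mem_sup.mp hw
  rw [inner_add_right, hp u hu, hq v hv, add_zero]

section Main

variable {𝔩 H}
variable {m₁ m₂ : Submodule ℝ L}

-- Step 1 : [m₁, m₂] = 0
lemma step1
    (hsup : m₁ ⊔ m₂ = Hᗮ)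
    (horth : ∀ x ∈ m₁, ∀ y ∈ m₂, ⟪x, y⟫ = 0)
    (hHm₂ : ∀ Z ∈ H, ∀ x ∈ m₂, 𝔩.br Z x ∈ m₂)
    (h₁₁ : ∀ x ∈ m₁, ∀ y ∈ m₁, 𝔩.br x y ∈ H ⊔ m₁)
    (h₂₂ : ∀ x ∈ m₂, ∀ y ∈ m₂, 𝔩.br x y ∈ H ⊔ m₂) :
    ∀ x ∈ m₁, ∀ y ∈ m₂, 𝔩.br x y = 0 := by
  have hm₁ : m₁ ≤ Hᗮ := hsup ▸ le_sup_left
  have hm₂ : m₂ ≤ Hᗮ := hsup ▸ le_sup_right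
  intro x hx y hy
  have hcH : 𝔩.br x y ∈ Hᗮ := by
    rw [Submodule.mem_orthogonal']
    intro Z hZ
    rw [𝔩.skew, br_antisymm 𝔩 y Z, inner_neg_right]
    rw [horth x hx _ (hHm₂ Z hZ y hy), neg_zero]
  have hc : 𝔩.br x y ∈ m₁ ⊔ m₂ := by rw [hsup]; exact hcH
  obtain ⟨a, ha, b, hb, hab⟩ := Submodule.mem_sup.mp hc
  have hca : ⟪𝔩.br x y, a⟫ = 0 := by
    rw [br_antisymm 𝔩 x y, inner_neg_left, 𝔩.skew]
    have : ⟪y, 𝔩.br x a⟫ = 0 := by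
      refine inner_zero_of_orth₂ (fun u hu => ?_) (fun u hu => ?_) (h₁₁ x hx a ha)
      · exact (Submodule.mem_orthogonal' H y).mp (hm₂ hy) u hu
      · rw [real_inner_comm]; exact horth u hu y hy
    rw [this, neg_zero]
  have hcb : ⟪𝔩.br x y, b⟫ = 0 := by
    rw [𝔩.skew]
    refine inner_zero_of_orth₂ (fun u hu => ?_) (fun u hu => ?_) (h₂₂ y hy b hb)
    · exact (Submodule.mem_orthogonal' H x).mp (hm₁ hx) u hu
    · exact horth x hx u hu
  have hcc : ⟪𝔩.br x y, a + b⟫ = 0 := by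
    rw [inner_add_right, hca, hcb, add_zero]
  rw [hab] at hcc
  exact inner_self_eq_zero.mp hcc

-- decomposition of a bracket of two elements of m₁
lemma br_decomp
    (hsup : m₁ ⊔ m₂ = Hᗮ)
    (h₁₁ : ∀ x ∈ m₁, ∀ y ∈ m₁, 𝔩.br x y ∈ H ⊔ m₁)
    {x y : L} (hx : x ∈ m₁) (hy : y ∈ m₁) :
    𝔩.br x y - projL H (𝔩.br x y) ∈ m₁ := by
  have hm₁ : m₁ ≤ Hᗮ := hsup ▸ le_sup_left
  obtain ⟨h, hh, a, ha, hha⟩ := Submodule.mem_sup.mp (h₁₁ x hx y hy)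
  have : projL H (𝔩.br x y) = h := by rw [← hha]; exact projL_add_eq' H hh (hm₁ ha)
  rw [this, ← hha]; simpa using ha

lemma br_mem_idealPart
    (hsup : m₁ ⊔ m₂ = Hᗮ)
    (h₁₁ : ∀ x ∈ m₁, ∀ y ∈ m₁, 𝔩.br x y ∈ H ⊔ m₁)
    {x y : L} (hx : x ∈ m₁) (hy : y ∈ m₁) :
    𝔩.br x y ∈ idealPart 𝔩 H m₁ := by
  have h1 : projL H (𝔩.br x y) ∈ idealPart 𝔩 H m₁ := by
    refine Submodule.mem_sup_left (Submodule.mem_map.mpr ⟨𝔩.br x y, ?_, rfl⟩)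
    exact Submodule.subset_span ⟨x, hx, y, hy, rfl⟩
  have h2 : 𝔩.br x y - projL H (𝔩.br x y) ∈ idealPart 𝔩 H m₁ :=
    Submodule.mem_sup_right (br_decomp hsup h₁₁ hx hy)
  simpa using add_mem h1 h2

lemma projL_brSpan_mem_idealPart {w : L} (hw : w ∈ brSpan 𝔩 m₁) :
    projL H w ∈ idealPart 𝔩 H m₁ :=
  Submodule.mem_sup_left (Submodule.mem_map.mpr ⟨w, hw, rfl⟩)

lemma ideal_lemma
    (hsup : m₁ ⊔ m₂ = Hᗮ)
    (hz : ∀ x ∈ m₁, ∀ y ∈ m₂, 𝔩.br x y = 0)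
    (hHm₁ : ∀ Z ∈ H, ∀ x ∈ m₁, 𝔩.br Z x ∈ m₁)
    (h₁₁ : ∀ x ∈ m₁, ∀ y ∈ m₁, 𝔩.br x y ∈ H ⊔ m₁) :
    ∀ x : L, ∀ y ∈ idealPart 𝔩 H m₁, 𝔩.br x y ∈ idealPart 𝔩 H m₁ := by
  have hz' : ∀ x ∈ m₂, ∀ y ∈ m₁, 𝔩.br x y = 0 := fun x hx y hy => by
    rw [br_antisymm, hz y hy x hx, neg_zero]
  have claimA : ∀ Z ∈ H, ∀ w ∈ brSpan 𝔩 m₁, 𝔩.br Z (projL H w) ∈ idealPart 𝔩 H m₁ := by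
    intro Z hZ w hw
    induction hw using Submodule.span_induction with
    | mem w hwmem =>
      obtain ⟨x, hx, y, hy, rfl⟩ := hwmem
      have key : 𝔩.br Z (projL H (𝔩.br x y)) =
          𝔩.br Z (𝔩.br x y) - 𝔩.br Z (𝔩.br x y - projL H (𝔩.br x y)) := by
        rw [← map_sub, sub_sub_cancel]
      rw [key]
      refine sub_mem ?_ (Submodule.mem_sup_right (hHm₁ Z hZ _ (br_decomp hsup h₁₁ hx hy)))
      have hj := 𝔩.jacobi x y Z
      have hZeq : 𝔩.br Z (𝔩.br x y) = -(𝔩.br x (𝔩.br y Z) + 𝔩.br y (𝔩.br Z x)) :=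
        eq_neg_of_add_eq_zero_right hj
      rw [hZeq]
      refine neg_mem (add_mem ?_ ?_)
      · have : 𝔩.br y Z = - 𝔩.br Z y := br_antisymm 𝔩 y Z
        rw [this, map_neg]
        exact neg_mem (br_mem_idealPart hsup h₁₁ hx (hHm₁ Z hZ y hy))
      · exact br_mem_idealPart hsup h₁₁ hy (hHm₁ Z hZ x hx)
    | zero => simp only [map_zero]; exact zero_mem _
    | add a b _ _ iha ihb => rw [map_add, map_add]; exact add_mem iha ihb
    | smul r a _ iha => rw [map_smul, map_smul]; exact Submodule.smul_mem _ _ iha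
  have claimB : ∀ b ∈ m₂, ∀ w ∈ brSpan 𝔩 m₁, 𝔩.br b (projL H w) = 0 := by
    intro b hb w hw
    induction hw using Submodule.span_induction with
    | mem w hwmem =>
      obtain ⟨x, hx, y, hy, rfl⟩ := hwmem
      have key : 𝔩.br b (projL H (𝔩.br x y)) =
          𝔩.br b (𝔩.br x y) - 𝔩.br b (𝔩.br x y - projL H (𝔩.br x y)) := by
        rw [← map_sub, sub_sub_cancel]
      rw [key, hz' b hb _ (br_decomp hsup h₁₁ hx hy), sub_zero]
      have hj := 𝔩.jacobi x y b
      have hbeq : 𝔩.br b (𝔩.br x y) = -(𝔩.br x (𝔩.br y b) + 𝔩.br y (𝔩.br b x)) :=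
        eq_neg_of_add_eq_zero_right hj
      rw [hbeq, hz y hy b hb, hz' b hb x hx, map_zero, map_zero, add_zero, neg_zero]
    | zero => simp only [map_zero]
    | add a c _ _ iha ihc => rw [map_add, map_add, iha, ihc, add_zero]
    | smul r a _ iha => rw [map_smul, map_smul, iha, smul_zero]
  intro x y hy
  obtain ⟨s, hs, t, ht, rfl⟩ := Submodule.mem_sup.mp hy
  obtain ⟨w, hw, rfl⟩ := Submodule.mem_map.mp hs
  have hxT : x ∈ H ⊔ Hᗮ := by
    rw [Submodule.sup_orthogonal_of_hasOrthogonalProjection]; exact Submodule.mem_top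
  rw [← hsup] at hxT
  obtain ⟨Z, hZ, c, hc, rfl⟩ := Submodule.mem_sup.mp hxT
  obtain ⟨a, ha, b, hb, rfl⟩ := Submodule.mem_sup.mp hc
  have hPw : (((projL H : L →L[ℝ] L) : L →ₗ[ℝ] L) : L → L) w = projL H w := rfl
  rw [hPw]
  simp only [map_add, LinearMap.add_apply]
  have H1 : 𝔩.br Z (projL H w) ∈ idealPart 𝔩 H m₁ := claimA Z hZ w hw
  have H2 : 𝔩.br Z t ∈ idealPart 𝔩 H m₁ := Submodule.mem_sup_right (hHm₁ Z hZ t ht)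
  have H3 : 𝔩.br a (projL H w) ∈ idealPart 𝔩 H m₁ := by
    rw [br_antisymm 𝔩 a (projL H w)]
    exact neg_mem (Submodule.mem_sup_right (hHm₁ _ (projL_mem' H w) a ha))
  have H4 : 𝔩.br a t ∈ idealPart 𝔩 H m₁ := br_mem_idealPart hsup h₁₁ ha ht
  have H5 : 𝔩.br b (projL H w) ∈ idealPart 𝔩 H m₁ := by
    rw [claimB b hb w hw]; exact zero_mem _
  have H6 : 𝔩.br b t ∈ idealPart 𝔩 H m₁ := by
    rw [hz' b hb t ht]; exact zero_mem _
  exact add_mem (add_mem H1 (add_mem H3 H5)) (add_mem H2 (add_mem H4 H6))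

lemma orth_lemma
    (hsup : m₁ ⊔ m₂ = Hᗮ)
    (horth : ∀ x ∈ m₁, ∀ y ∈ m₂, ⟪x, y⟫ = 0)
    (hz : ∀ x ∈ m₁, ∀ y ∈ m₂, 𝔩.br x y = 0)
    (h₁₁ : ∀ x ∈ m₁, ∀ y ∈ m₁, 𝔩.br x y ∈ H ⊔ m₁)
    (h₂₂ : ∀ x ∈ m₂, ∀ y ∈ m₂, 𝔩.br x y ∈ H ⊔ m₂) :
    ∀ x ∈ idealPart 𝔩 H m₁, ∀ y ∈ idealPart 𝔩 H m₂, ⟪x, y⟫ = 0 := by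
  have hm₁ : m₁ ≤ Hᗮ := hsup ▸ le_sup_left
  have hm₂ : m₂ ≤ Hᗮ := hsup ▸ le_sup_right
  have hsup' : m₂ ⊔ m₁ = Hᗮ := by rw [sup_comm]; exact hsup
  have horthH₁ : ∀ u ∈ m₁, ∀ Z ∈ H, ⟪u, Z⟫ = 0 := fun u hu Z hZ =>
    (Submodule.mem_orthogonal' H u).mp (hm₁ hu) Z hZ
  have horthH₂ : ∀ u ∈ m₂, ∀ Z ∈ H, ⟪u, Z⟫ = 0 := fun u hu Z hZ =>
    (Submodule.mem_orthogonal' H u).mp (hm₂ hu) Z hZ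
  have claimC : ∀ w ∈ brSpan 𝔩 m₁, ∀ w' ∈ brSpan 𝔩 m₂, ⟪projL H w, projL H w'⟫ = 0 := by
    intro w hw
    induction hw using Submodule.span_induction with
    | mem w hwmem =>
      intro w' hw'
      induction hw' using Submodule.span_induction with
      | mem w' hw'mem =>
        obtain ⟨x, hx, y, hy, rfl⟩ := hwmem
        obtain ⟨u, hu, v, hv, rfl⟩ := hw'mem
        have hA : 𝔩.br x y - projL H (𝔩.br x y) ∈ m₁ := br_decomp hsup h₁₁ hx hy
        have hB : 𝔩.br u v - projL H (𝔩.br u v) ∈ m₂ := br_decomp hsup' h₂₂ hu hv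
        have i1 : ⟪𝔩.br x y, 𝔩.br u v⟫ = 0 := by
          rw [𝔩.skew]
          have hj := 𝔩.jacobi y u v
          have e1 : 𝔩.br v y = 0 := by
            rw [br_antisymm, hz y hy v hv, neg_zero]
          have e2 : 𝔩.br y u = 0 := hz y hy u hu
          rw [e1, e2, map_zero, map_zero, add_zero, add_zero] at hj
          rw [hj, inner_zero_right]
        have i2 : ⟪𝔩.br x y, 𝔩.br u v - projL H (𝔩.br u v)⟫ = 0 := by
          rw [real_inner_comm]
          refine inner_zero_of_orth₂ (fun Z hZ => horthH₂ _ hB Z hZ)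
            (fun q hq => ?_) (h₁₁ x hx y hy)
          rw [real_inner_comm]; exact horth q hq _ hB
        have i3 : ⟪𝔩.br x y - projL H (𝔩.br x y), 𝔩.br u v⟫ = 0 :=
          inner_zero_of_orth₂ (fun Z hZ => horthH₁ _ hA Z hZ)
            (fun q hq => horth _ hA q hq) (h₂₂ u hu v hv)
        have i4 : ⟪𝔩.br x y - projL H (𝔩.br x y), 𝔩.br u v - projL H (𝔩.br u v)⟫ = 0 :=
          horth _ hA _ hB
        have key : ⟪𝔩.br x y - (𝔩.br x y - projL H (𝔩.br x y)),
            𝔩.br u v - (𝔩.br u v - projL H (𝔩.br u v))⟫ = 0 := by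
          simp only [inner_sub_left, inner_sub_right] at i2 i3 i4 ⊢
          linarith
        simpa using key
      | zero => simp
      | add a c _ _ iha ihc => rw [map_add, inner_add_right, iha, ihc, add_zero]
      | smul r a _ iha => rw [map_smul, real_inner_smul_right, iha, mul_zero]
    | zero => intro w' _; simp
    | add a c _ _ iha ihc =>
      intro w' hw'
      rw [map_add, inner_add_left, iha w' hw', ihc w' hw', add_zero]
    | smul r a _ iha =>
      intro w' hw'
      rw [map_smul, real_inner_smul_left, iha w' hw', mul_zero]
  intro x hx y hy
  obtain ⟨s, hs, t, ht, rfl⟩ := Submodule.mem_sup.mp hx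
  obtain ⟨w, hw, rfl⟩ := Submodule.mem_map.mp hs
  obtain ⟨s', hs', t', ht', rfl⟩ := Submodule.mem_sup.mp hy
  obtain ⟨w', hw', rfl⟩ := Submodule.mem_map.mp hs'
  have hPw : ∀ u : L, (((projL H : L →L[ℝ] L) : L →ₗ[ℝ] L) : L → L) u = projL H u :=
    fun _ => rfl
  rw [hPw, hPw, inner_add_left, inner_add_right, inner_add_right]
  rw [claimC w hw w' hw', real_inner_comm t' (projL H w),
    horthH₂ t' ht' _ (projL_mem' H w), horthH₁ t ht _ (projL_mem' H w'), horth t ht t' ht']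
  ring

lemma sup_top_lemma
    (hH : IsLieSub 𝔩 H)
    (heff : ∀ I : Submodule ℝ L, (∀ x : L, ∀ y ∈ I, 𝔩.br x y ∈ I) → I ≤ H → I = ⊥)
    (hsup : m₁ ⊔ m₂ = Hᗮ)
    (hz : ∀ x ∈ m₁, ∀ y ∈ m₂, 𝔩.br x y = 0)
    (hHm₁ : ∀ Z ∈ H, ∀ x ∈ m₁, 𝔩.br Z x ∈ m₁)
    (hHm₂ : ∀ Z ∈ H, ∀ x ∈ m₂, 𝔩.br Z x ∈ m₂)
    (h₁₁ : ∀ x ∈ m₁, ∀ y ∈ m₁, 𝔩.br x y ∈ H ⊔ m₁)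
    (h₂₂ : ∀ x ∈ m₂, ∀ y ∈ m₂, 𝔩.br x y ∈ H ⊔ m₂) :
    idealPart 𝔩 H m₁ ⊔ idealPart 𝔩 H m₂ = ⊤ := by
  have hm₁ : m₁ ≤ Hᗮ := hsup ▸ le_sup_left
  have hm₂ : m₂ ≤ Hᗮ := hsup ▸ le_sup_right
  have hsup' : m₂ ⊔ m₁ = Hᗮ := by rw [sup_comm]; exact hsup
  have hz' : ∀ x ∈ m₂, ∀ y ∈ m₁, 𝔩.br x y = 0 := fun x hx y hy => by
    rw [br_antisymm, hz y hy x hx, neg_zero]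
  set P : L →ₗ[ℝ] L := ((projL H : L →L[ℝ] L) : L →ₗ[ℝ] L) with hP
  have hPapp : ∀ u : L, P u = projL H u := fun _ => rfl
  set S : Submodule ℝ L := Submodule.map P (brSpan 𝔩 m₁) ⊔ Submodule.map P (brSpan 𝔩 m₂)
    with hSdef
  have hmapH : ∀ m : Submodule ℝ L, Submodule.map P (brSpan 𝔩 m) ≤ H := by
    intro m s hs
    obtain ⟨w, _, rfl⟩ := Submodule.mem_map.mp hs
    exact projL_mem' H w
  have hSH : S ≤ H := sup_le (hmapH m₁) (hmapH m₂)
  -- brackets of mᵢ are orthogonal to elements of Sᗮ ⊓ H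
  have hWbr : ∀ (m : Submodule ℝ L), m ≤ Hᗮ →
      (∀ x ∈ m, ∀ y ∈ m, 𝔩.br x y ∈ H ⊔ m) →
      Submodule.map P (brSpan 𝔩 m) ≤ S →
      ∀ W ∈ Sᗮ ⊓ H, ∀ x ∈ m, ∀ y ∈ m, ⟪W, 𝔩.br x y⟫ = 0 := by
    intro m hmH hmm hmS W hW x hx y hy
    obtain ⟨hWS, hWH⟩ := Submodule.mem_inf.mp hW
    obtain ⟨h, hh, a, ha, hha⟩ := Submodule.mem_sup.mp (hmm x hx y hy)
    have hproj : projL H (𝔩.br x y) = h := by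
      rw [← hha]; exact projL_add_eq' H hh (hmH ha)
    have e1 : ⟪W, a⟫ = 0 := by
      rw [real_inner_comm]
      exact (Submodule.mem_orthogonal' H a).mp (hmH ha) W hWH
    have e2 : ⟪W, h⟫ = 0 := by
      rw [real_inner_comm]
      refine (Submodule.mem_orthogonal S W).mp hWS h (hmS ?_)
      refine Submodule.mem_map.mpr ⟨𝔩.br x y, Submodule.subset_span ⟨x, hx, y, hy, rfl⟩, ?_⟩
      rw [hPapp, hproj]
    rw [← hha, inner_add_right, e1, e2, add_zero]
  have hWbr₁ := hWbr m₁ hm₁ h₁₁ le_sup_left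
  have hWbr₂ := hWbr m₂ hm₂ h₂₂ le_sup_right
  -- step (a) : [W, m] = 0 for W ∈ Sᗮ ⊓ H
  have suba : ∀ W ∈ Sᗮ ⊓ H, ∀ x ∈ m₁, 𝔩.br W x = 0 := by
    intro W hW x hx
    have hmem : 𝔩.br W x ∈ m₁ := hHm₁ W (Submodule.mem_inf.mp hW).2 x hx
    have : ⟪𝔩.br W x, 𝔩.br W x⟫ = 0 := by
      rw [𝔩.skew]; exact hWbr₁ W hW x hx _ hmem
    exact inner_self_eq_zero.mp this
  have subb : ∀ W ∈ Sᗮ ⊓ H, ∀ x ∈ m₂, 𝔩.br W x = 0 := by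
    intro W hW x hx
    have hmem : 𝔩.br W x ∈ m₂ := hHm₂ W (Submodule.mem_inf.mp hW).2 x hx
    have : ⟪𝔩.br W x, 𝔩.br W x⟫ = 0 := by
      rw [𝔩.skew]; exact hWbr₂ W hW x hx _ hmem
    exact inner_self_eq_zero.mp this
  -- step (c) : Sᗮ ⊓ H is an ideal
  have subc : ∀ x : L, ∀ W ∈ Sᗮ ⊓ H, 𝔩.br x W ∈ Sᗮ ⊓ H := by
    intro x W hW
    obtain ⟨hWS, hWH⟩ := Submodule.mem_inf.mp hW
    have hxT : x ∈ H ⊔ Hᗮ := by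
      rw [Submodule.sup_orthogonal_of_hasOrthogonalProjection]; exact Submodule.mem_top
    rw [← hsup] at hxT
    obtain ⟨Z, hZ, c, hc, rfl⟩ := Submodule.mem_sup.mp hxT
    obtain ⟨a, ha, b, hb, rfl⟩ := Submodule.mem_sup.mp hc
    have hbra : 𝔩.br a W = 0 := by
      rw [br_antisymm, suba W hW a ha, neg_zero]
    have hbrb : 𝔩.br b W = 0 := by
      rw [br_antisymm, subb W hW b hb, neg_zero]
    have hZWH : 𝔩.br Z W ∈ H := hH Z hZ W hWH
    have hZWS : 𝔩.br Z W ∈ Sᗮ := by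
      rw [Submodule.mem_orthogonal]
      have claimD : ∀ (m : Submodule ℝ L), m ≤ Hᗮ →
          (∀ W' ∈ Sᗮ ⊓ H, ∀ x' ∈ m, 𝔩.br W' x' = 0) →
          (∀ x ∈ m, ∀ y ∈ m, 𝔩.br x y ∈ H ⊔ m) →
          ∀ w ∈ brSpan 𝔩 m, ⟪projL H w, 𝔩.br Z W⟫ = 0 := by
        intro m hmH hann hmm w hw
        induction hw using Submodule.span_induction with
        | mem w hwmem =>
          obtain ⟨x, hx, y, hy, rfl⟩ := hwmem
          obtain ⟨h, hh, a', ha', hha⟩ := Submodule.mem_sup.mp (hmm x hx y hy)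
          have hproj : projL H (𝔩.br x y) = h := by
            rw [← hha]; exact projL_add_eq' H hh (hmH ha')
          have e1 : ⟪a', 𝔩.br Z W⟫ = 0 :=
            (Submodule.mem_orthogonal' H a').mp (hmH ha') _ hZWH
          have e2 : ⟪𝔩.br x y, 𝔩.br Z W⟫ = 0 := by
            rw [real_inner_comm, 𝔩.skew]
            have hj := 𝔩.jacobi x y W
            have f1 : 𝔩.br y W = 0 := by
              rw [br_antisymm, hann W hW y hy, neg_zero]
            have f2 : 𝔩.br W x = 0 := hann W hW x hx
            rw [f1, f2, map_zero, map_zero] at hj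
            have hj0 : 𝔩.br W (𝔩.br x y) = 0 := by simpa using hj
            rw [hj0, inner_zero_right]
          calc ⟪projL H (𝔩.br x y), 𝔩.br Z W⟫
              = ⟪𝔩.br x y - a', 𝔩.br Z W⟫ := by
                rw [hproj, ← hha, add_sub_cancel_right]
            _ = 0 := by rw [inner_sub_left, e1, e2, sub_zero]
        | zero => simp
        | add a' c' _ _ iha ihc => rw [map_add, inner_add_left, iha, ihc, add_zero]
        | smul r a' _ iha => rw [map_smul, real_inner_smul_left, iha, mul_zero]
      intro u hu
      obtain ⟨u₁, hu₁, u₂, hu₂, rfl⟩ := Submodule.mem_sup.mp hu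
      obtain ⟨w₁, hw₁, rfl⟩ := Submodule.mem_map.mp hu₁
      obtain ⟨w₂, hw₂, rfl⟩ := Submodule.mem_map.mp hu₂
      rw [inner_add_left, hPapp, hPapp, claimD m₁ hm₁ suba h₁₁ w₁ hw₁,
        claimD m₂ hm₂ subb h₂₂ w₂ hw₂, add_zero]
    have expand : 𝔩.br (Z + (a + b)) W = 𝔩.br Z W := by
      simp only [map_add, LinearMap.add_apply, hbra, hbrb, add_zero]
    rw [expand]
    exact Submodule.mem_inf.mpr ⟨hZWS, hZWH⟩
  have hbot : Sᗮ ⊓ H = ⊥ := heff _ subc inf_le_right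
  have hSeq : S = H := by
    have h2 := Submodule.sup_orthogonal_inf_of_hasOrthogonalProjection hSH
    rwa [hbot, sup_bot_eq] at h2
  show (Submodule.map P (brSpan 𝔩 m₁) ⊔ m₁) ⊔ (Submodule.map P (brSpan 𝔩 m₂) ⊔ m₂) = ⊤
  rw [sup_sup_sup_comm, ← hSdef, hSeq, hsup, Submodule.sup_orthogonal_of_hasOrthogonalProjection]

end Main

-- STATEMENT 15
theorem splitting_theorem
    (hH : IsLieSub 𝔩 H)
    (heff : ∀ I : Submodule ℝ L, (∀ x : L, ∀ y ∈ I, 𝔩.br x y ∈ I) → I ≤ H → I = ⊥)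
    (m₁ m₂ : Submodule ℝ L)
    (hsup : m₁ ⊔ m₂ = Hᗮ) (hdisj : m₁ ⊓ m₂ = ⊥)
    (horth : ∀ x ∈ m₁, ∀ y ∈ m₂, ⟪x, y⟫ = 0)
    (hHm₁ : ∀ Z ∈ H, ∀ x ∈ m₁, 𝔩.br Z x ∈ m₁)
    (hHm₂ : ∀ Z ∈ H, ∀ x ∈ m₂, 𝔩.br Z x ∈ m₂)
    (h₁₁ : ∀ x ∈ m₁, ∀ y ∈ m₁, 𝔩.br x y ∈ H ⊔ m₁)
    (h₂₂ : ∀ x ∈ m₂, ∀ y ∈ m₂, 𝔩.br x y ∈ H ⊔ m₂) :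
    (∀ x ∈ m₁, ∀ y ∈ m₂, 𝔩.br x y = 0) ∧
    (∀ x : L, ∀ y ∈ idealPart 𝔩 H m₁, 𝔩.br x y ∈ idealPart 𝔩 H m₁) ∧
    (∀ x : L, ∀ y ∈ idealPart 𝔩 H m₂, 𝔩.br x y ∈ idealPart 𝔩 H m₂) ∧
    (∀ x ∈ idealPart 𝔩 H m₁, ∀ y ∈ idealPart 𝔩 H m₂, ⟪x, y⟫ = 0) ∧
    idealPart 𝔩 H m₁ ⊔ idealPart 𝔩 H m₂ = ⊤ ∧
    idealPart 𝔩 H m₁ ⊓ idealPart 𝔩 H m₂ = ⊥ := by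
  have hsup' : m₂ ⊔ m₁ = Hᗮ := by rw [sup_comm]; exact hsup
  have hz : ∀ x ∈ m₁, ∀ y ∈ m₂, 𝔩.br x y = 0 := step1 hsup horth hHm₂ h₁₁ h₂₂
  have hz' : ∀ x ∈ m₂, ∀ y ∈ m₁, 𝔩.br x y = 0 := fun x hx y hy => by
    rw [br_antisymm, hz y hy x hx, neg_zero]
  have orth := orth_lemma hsup horth hz h₁₁ h₂₂
  refine ⟨hz, ideal_lemma hsup hz hHm₁ h₁₁, ideal_lemma hsup' hz' hHm₂ h₂₂, orth,
    sup_top_lemma hH heff hsup hz hHm₁ hHm₂ h₁₁ h₂₂, ?_⟩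
  rw [eq_bot_iff]
  intro x hx
  obtain ⟨hx1, hx2⟩ := Submodule.mem_inf.mp hx
  have h0 := orth x hx1 x hx2
  simpa using inner_self_eq_zero.mp h0
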